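/- Contraction of the mean-field update map: suppose sup_{ψ ∈ [0,1]^V} |F̃(ψ)| < 1/|V|. Then the map T(ψ) = σ(∇F̃(ψ)) (sigmoid applied coordinate-wise to the gradient of the multilinear extension) satisfies ‖T(x) − T(y)‖₂ < ‖x − y‖₂ for all distinct x, y ∈ [0,1]^V, i.e., the Frobenius norm of its Jacobian is strictly less than 1 on [0,1]^V. -/

import Mathlib

open Real Finset

noncomputable def mlext {n : ℕ} (F : Finset (Fin n) → ℝ) (ψ : Fin n → ℝ) : ℝ :=
  ∑ S : Finset (Fin n), F S * ((∏ j ∈ S, ψ j) * ∏ j ∈ Sᶜ, (1 - ψ j))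

noncomputable def pd {n : ℕ} (i : Fin n) (f : (Fin n → ℝ) → ℝ) (ψ : Fin n → ℝ) : ℝ :=
  deriv (fun t => f (Function.update ψ i t)) (ψ i)

noncomputable def sigmoid (x : ℝ) : ℝ := (1 + Real.exp (-x))⁻¹

/- ### Auxiliary lemmas -/

lemma mlext_affine {n : ℕ} (F : Finset (Fin n) → ℝ) (ψ : Fin n → ℝ) (i : Fin n) (t : ℝ) :
    mlext F (Function.update ψ i t)
      = (1 - t) * mlext F (Function.update ψ i 0) + t * mlext F (Function.update ψ i 1) := by
  unfold mlext
  rw [Finset.mul_sum, Finset.mul_sum, ← Finset.sum_add_distrib]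
  refine Finset.sum_congr rfl fun S _ => ?_
  by_cases hiS : i ∈ S
  · have hic : i ∉ Sᶜ := by simp [hiS]
    have hc : ∀ (u : ℝ), ∏ j ∈ Sᶜ, (1 - Function.update ψ i u j) = ∏ j ∈ Sᶜ, (1 - ψ j) :=
      fun u => Finset.prod_congr rfl fun j hj => by
        rw [Function.update_of_ne (ne_of_mem_of_not_mem hj hic)]
    rw [Finset.prod_update_of_mem hiS, Finset.prod_update_of_mem hiS,
      Finset.prod_update_of_mem hiS, hc, hc, hc]
    ring
  · have hic : i ∈ Sᶜ := by simp [hiS]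
    have hs : ∀ (u : ℝ), ∏ j ∈ S, Function.update ψ i u j = ∏ j ∈ S, ψ j :=
      fun u => Finset.prod_congr rfl fun j hj => by
        rw [Function.update_of_ne (ne_of_mem_of_not_mem hj hiS)]
    have hc : ∀ (u : ℝ), ∏ j ∈ Sᶜ, (1 - Function.update ψ i u j)
        = (1 - u) * ∏ j ∈ Sᶜ \ {i}, (1 - ψ j) := by
      intro u
      have : (fun j => 1 - Function.update ψ i u j)
          = Function.update (fun j => 1 - ψ j) i (1 - u) := by
        funext j
        rcases eq_or_ne j i with rfl | h
        · simp
        · simp [Function.update_of_ne h]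
      calc ∏ j ∈ Sᶜ, (1 - Function.update ψ i u j)
          = ∏ j ∈ Sᶜ, Function.update (fun j => 1 - ψ j) i (1 - u) j := by rw [this]
        _ = (1 - u) * ∏ j ∈ Sᶜ \ {i}, (1 - ψ j) := Finset.prod_update_of_mem hic _ _
    rw [hs, hs, hs, hc, hc, hc]
    ring

lemma pd_mlext {n : ℕ} (F : Finset (Fin n) → ℝ) (ψ : Fin n → ℝ) (i : Fin n) :
    pd i (mlext F) ψ
      = mlext F (Function.update ψ i 1) - mlext F (Function.update ψ i 0) := by
  unfold pd
  set A := mlext F (Function.update ψ i 0) with hA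
  set B := mlext F (Function.update ψ i 1) with hB
  have hfun : (fun t => mlext F (Function.update ψ i t)) = fun t => A + t * (B - A) := by
    funext t; rw [mlext_affine]; ring
  have h : HasDerivAt (fun t : ℝ => A + t * (B - A)) (1 * (B - A)) (ψ i) :=
    ((hasDerivAt_id _).mul_const _).const_add A
  rw [hfun, h.deriv]; ring

lemma sigmoid_hasDeriv (x : ℝ) :
    HasDerivAt _root_.sigmoid (Real.exp (-x) / (1 + Real.exp (-x)) ^ 2) x := by
  have hne : (1 : ℝ) + Real.exp (-x) ≠ 0 := by positivity
  have h1 : HasDerivAt (fun y : ℝ => 1 + Real.exp (-y)) (Real.exp (-x) * -1) x :=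
    ((hasDerivAt_neg x).exp).const_add 1
  have h2 := h1.inv hne
  exact h2.congr_deriv (by ring)

lemma sigmoid_deriv_mem (c : ℝ) :
    0 ≤ Real.exp (-c) / (1 + Real.exp (-c)) ^ 2
      ∧ Real.exp (-c) / (1 + Real.exp (-c)) ^ 2 ≤ 1 / 4 := by
  have h0 : (0:ℝ) < Real.exp (-c) := Real.exp_pos _
  have h1 : (0:ℝ) < (1 + Real.exp (-c)) ^ 2 := by positivity
  constructor
  · positivity
  · rw [div_le_div_iff₀ h1 (by norm_num)]
    nlinarith [sq_nonneg (1 - Real.exp (-c))]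

lemma sigmoid_lip (a b : ℝ) : |_root_.sigmoid a - _root_.sigmoid b| ≤ (1 / 4) * |a - b| := by
  have key : ∀ u v : ℝ, u < v → |_root_.sigmoid v - _root_.sigmoid u| ≤ (1 / 4) * (v - u) := by
    intro u v huv
    have hcont : ContinuousOn _root_.sigmoid (Set.Icc u v) :=
      fun z _ => (sigmoid_hasDeriv z).continuousAt.continuousWithinAt
    have hdiff : DifferentiableOn ℝ _root_.sigmoid (Set.Ioo u v) :=
      fun z _ => (sigmoid_hasDeriv z).differentiableAt.differentiableWithinAt
    obtain ⟨c, _, hc⟩ := exists_deriv_eq_slope _root_.sigmoid huv hcont hdiff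
    rw [(sigmoid_hasDeriv c).deriv] at hc
    obtain ⟨hc0, hc4⟩ := sigmoid_deriv_mem c
    have hvu : (0:ℝ) < v - u := by linarith
    have heq : _root_.sigmoid v - _root_.sigmoid u = (Real.exp (-c) / (1 + Real.exp (-c)) ^ 2) * (v - u) := by
      field_simp at hc ⊢; linarith [hc]
    rw [heq, abs_of_nonneg (by positivity)]
    nlinarith
  rcases lt_trichotomy a b with h | h | h
  · rw [abs_sub_comm, abs_sub_comm a b, abs_of_pos (by linarith : (0:ℝ) < b - a)]
    exact key a b h
  · simp [h]
  · rw [abs_of_pos (by linarith : (0:ℝ) < a - b)]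
    exact key b a h

theorem mean_field_update_contraction {n : ℕ} (hn : 1 ≤ n) (F : Finset (Fin n) → ℝ)
    (hsup : sSup ((fun φ => |mlext F φ|) '' {φ : Fin n → ℝ | ∀ k, φ k ∈ Set.Icc (0:ℝ) 1})
      < 1 / n) :
    ∀ x y : Fin n → ℝ, (∀ k, x k ∈ Set.Icc (0:ℝ) 1) → (∀ k, y k ∈ Set.Icc (0:ℝ) 1) →
      x ≠ y →
      Real.sqrt (∑ i, (_root_.sigmoid (pd i (mlext F) x) - _root_.sigmoid (pd i (mlext F) y)) ^ 2)
        < Real.sqrt (∑ i, (x i - y i) ^ 2) := by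
  intro x y hx hy hxy
  set M := sSup ((fun φ => |mlext F φ|) '' {φ : Fin n → ℝ | ∀ k, φ k ∈ Set.Icc (0:ℝ) 1}) with hMdef
  -- boundedness of the image set
  have hbdd : BddAbove ((fun φ => |mlext F φ|) '' {φ : Fin n → ℝ | ∀ k, φ k ∈ Set.Icc (0:ℝ) 1}) := by
    refine ⟨∑ S : Finset (Fin n), |F S|, ?_⟩
    rintro v ⟨φ, hφ, rfl⟩
    calc |mlext F φ| ≤ ∑ S : Finset (Fin n), |F S * ((∏ j ∈ S, φ j) * ∏ j ∈ Sᶜ, (1 - φ j))| :=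
          Finset.abs_sum_le_sum_abs _ _
      _ ≤ ∑ S : Finset (Fin n), |F S| := by
          refine Finset.sum_le_sum fun S _ => ?_
          rw [abs_mul]
          have h1 : 0 ≤ (∏ j ∈ S, φ j) * ∏ j ∈ Sᶜ, (1 - φ j) := by
            apply mul_nonneg
            · exact Finset.prod_nonneg fun j _ => (hφ j).1
            · exact Finset.prod_nonneg fun j _ => by linarith [(hφ j).2]
          have h2 : (∏ j ∈ S, φ j) * ∏ j ∈ Sᶜ, (1 - φ j) ≤ 1 := by
            apply mul_le_one₀
            · exact Finset.prod_le_one (fun j _ => (hφ j).1) (fun j _ => (hφ j).2)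
            · exact Finset.prod_nonneg fun j _ => by linarith [(hφ j).2]
            · exact Finset.prod_le_one (fun j _ => by linarith [(hφ j).2])
                (fun j _ => by linarith [(hφ j).1])
          rw [abs_of_nonneg h1]
          nlinarith [abs_nonneg (F S)]
  have hM : ∀ φ : Fin n → ℝ, (∀ k, φ k ∈ Set.Icc (0:ℝ) 1) → |mlext F φ| ≤ M :=
    fun φ hφ => le_csSup hbdd ⟨φ, hφ, rfl⟩
  have hM0 : 0 ≤ M :=
    le_trans (abs_nonneg _) (hM (fun _ => 0) (fun k => by norm_num))
  -- cube preservation under update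
  have hupd : ∀ (ψ : Fin n → ℝ), (∀ k, ψ k ∈ Set.Icc (0:ℝ) 1) → ∀ (i : Fin n) (t : ℝ),
      t ∈ Set.Icc (0:ℝ) 1 → ∀ k, Function.update ψ i t k ∈ Set.Icc (0:ℝ) 1 := by
    intro ψ hψ i t ht k
    rcases eq_or_ne k i with rfl | h
    · simpa using ht
    · rw [Function.update_of_ne h]; exact hψ k
  -- the gradient function
  set g : Fin n → (Fin n → ℝ) → ℝ :=
    fun i ψ => mlext F (Function.update ψ i 1) - mlext F (Function.update ψ i 0) with hgdef
  have hgbound : ∀ (i : Fin n) (φ : Fin n → ℝ), (∀ k, φ k ∈ Set.Icc (0:ℝ) 1) → |g i φ| ≤ 2 * M := by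
    intro i φ hφ
    have h1 := hM _ (hupd φ hφ i 1 (by norm_num))
    have h0 := hM _ (hupd φ hφ i 0 (by norm_num))
    calc |g i φ| ≤ |mlext F (Function.update φ i 1)| + |mlext F (Function.update φ i 0)| :=
          abs_sub _ _
      _ ≤ 2 * M := by linarith
  -- g is affine in each coordinate
  have hgaffine : ∀ (i k : Fin n) (ψ : Fin n → ℝ) (t : ℝ),
      g i (Function.update ψ k t)
        = g i (Function.update ψ k 0) + t * (g i (Function.update ψ k 1) - g i (Function.update ψ k 0)) := by
    intro i k ψ t
    rcases eq_or_ne k i with rfl | h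
    · simp only [hgdef, Function.update_idem]; ring
    · have hcomm : ∀ (u w : ℝ), Function.update (Function.update ψ k u) i w
          = Function.update (Function.update ψ i w) k u :=
        fun u w => Function.update_comm h u w ψ
      simp only [hgdef, hcomm]
      rw [mlext_affine F (Function.update ψ i 1) k t, mlext_affine F (Function.update ψ i 0) k t,
        mlext_affine F (Function.update ψ i 1) k 0, mlext_affine F (Function.update ψ i 0) k 0,
        mlext_affine F (Function.update ψ i 1) k 1, mlext_affine F (Function.update ψ i 0) k 1]
      ring
  -- telescoping bound
  have tel : ∀ s : Finset (Fin n), ∀ u v : Fin n → ℝ,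
      (∀ k, u k ∈ Set.Icc (0:ℝ) 1) → (∀ k, v k ∈ Set.Icc (0:ℝ) 1) →
      (∀ k ∉ s, u k = v k) → ∀ i, |g i u - g i v| ≤ ∑ k ∈ s, 4 * M * |u k - v k| := by
    intro s
    induction s using Finset.induction_on with
    | empty =>
      intro u v hu hv hagree i
      have : u = v := funext fun k => hagree k (by simp)
      simp [this]
    | @insert a s ha ih =>
      intro u v hu hv hagree i
      set u' := Function.update u a (v a) with hu'def
      have hu' : ∀ k, u' k ∈ Set.Icc (0:ℝ) 1 := hupd u hu a (v a) (hv a)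
      have hagree' : ∀ k ∉ s, u' k = v k := by
        intro k hk
        rcases eq_or_ne k a with rfl | h
        · simp [hu'def]
        · rw [hu'def, Function.update_of_ne h]
          exact hagree k (by simp [hk, h])
      have h1 : |g i u - g i u'| ≤ 4 * M * |u a - v a| := by
        have e1 : u = Function.update u' a (u a) := by
          funext k
          rcases eq_or_ne k a with rfl | h
          · simp
          · simp [hu'def, Function.update_of_ne h]
        have e2 : g i u' = g i (Function.update u' a (v a)) := by
          rw [hu'def, Function.update_idem]
        have hA := hgaffine i a u' (u a)
        have hB := hgaffine i a u' (v a)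
        have hdiff : g i u - g i u'
            = (u a - v a) * (g i (Function.update u' a 1) - g i (Function.update u' a 0)) := by
          rw [e2]; nth_rewrite 1 [e1]; rw [hA, hB]; ring
        have hslope : |g i (Function.update u' a 1) - g i (Function.update u' a 0)| ≤ 4 * M := by
          have b1 := hgbound i _ (hupd u' hu' a 1 (by norm_num))
          have b0 := hgbound i _ (hupd u' hu' a 0 (by norm_num))
          calc |g i (Function.update u' a 1) - g i (Function.update u' a 0)|
              ≤ |g i (Function.update u' a 1)| + |g i (Function.update u' a 0)| := abs_sub _ _
            _ ≤ 4 * M := by linarith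
        rw [hdiff, abs_mul, mul_comm]
        exact mul_le_mul_of_nonneg_right hslope (abs_nonneg _)
      have h2 : |g i u' - g i v| ≤ ∑ k ∈ s, 4 * M * |u' k - v k| := ih u' v hu' hv hagree' i
      have hsum : ∑ k ∈ s, 4 * M * |u' k - v k| = ∑ k ∈ s, 4 * M * |u k - v k| := by
        refine Finset.sum_congr rfl fun k hk => ?_
        rw [hu'def, Function.update_of_ne (ne_of_mem_of_not_mem hk ha)]
      rw [Finset.sum_insert ha]
      calc |g i u - g i v| ≤ |g i u - g i u'| + |g i u' - g i v| := abs_sub_le _ _ _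
        _ ≤ 4 * M * |u a - v a| + ∑ k ∈ s, 4 * M * |u k - v k| := by
            rw [← hsum]; exact add_le_add h1 h2
  set T := ∑ k, |x k - y k| with hTdef
  have hT0 : 0 ≤ T := Finset.sum_nonneg fun k _ => abs_nonneg _
  have hgxy : ∀ i, |g i x - g i y| ≤ 4 * M * T := by
    intro i
    have := tel Finset.univ x y hx hy (fun k hk => absurd (Finset.mem_univ k) hk) i
    calc |g i x - g i y| ≤ ∑ k, 4 * M * |x k - y k| := this
      _ = 4 * M * T := by rw [hTdef, Finset.mul_sum]
  -- _root_.sigmoid differences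
  have hsig : ∀ i, |_root_.sigmoid (pd i (mlext F) x) - _root_.sigmoid (pd i (mlext F) y)| ≤ M * T := by
    intro i
    calc |_root_.sigmoid (pd i (mlext F) x) - _root_.sigmoid (pd i (mlext F) y)|
        ≤ (1 / 4) * |pd i (mlext F) x - pd i (mlext F) y| := sigmoid_lip _ _
      _ = (1 / 4) * |g i x - g i y| := by rw [pd_mlext, pd_mlext]
      _ ≤ (1 / 4) * (4 * M * T) := by
          have := hgxy i
          linarith
      _ = M * T := by ring
  set S2 := ∑ i, (x i - y i) ^ 2 with hS2def
  have hS2pos : 0 < S2 := by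
    obtain ⟨k, hk⟩ := Function.ne_iff.mp hxy
    exact Finset.sum_pos' (fun i _ => sq_nonneg _)
      ⟨k, Finset.mem_univ k, by have h := sub_ne_zero.mpr hk; positivity⟩
  have hT2 : T ^ 2 ≤ n * S2 := by
    have := sq_sum_le_card_mul_sum_sq (s := Finset.univ) (f := fun k => |x k - y k|)
    simpa [sq_abs, Finset.card_univ] using this
  have hsum : ∑ i, (_root_.sigmoid (pd i (mlext F) x) - _root_.sigmoid (pd i (mlext F) y)) ^ 2
      ≤ ((n : ℝ) * M) ^ 2 * S2 := by
    calc ∑ i, (_root_.sigmoid (pd i (mlext F) x) - _root_.sigmoid (pd i (mlext F) y)) ^ 2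
        ≤ ∑ _i : Fin n, (M * T) ^ 2 := by
          refine Finset.sum_le_sum fun i _ => ?_
          rw [← sq_abs]
          exact pow_le_pow_left₀ (abs_nonneg _) (hsig i) 2
      _ = n * (M * T) ^ 2 := by simp [Finset.card_univ]
      _ = n * M ^ 2 * T ^ 2 := by ring
      _ ≤ n * M ^ 2 * (n * S2) := by
          apply mul_le_mul_of_nonneg_left hT2
          positivity
      _ = ((n : ℝ) * M) ^ 2 * S2 := by ring
  have hnM : (n : ℝ) * M < 1 := by
    have hn' : (0:ℝ) < n := by exact_mod_cast hn
    have : M < 1 / n := hsup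
    calc (n : ℝ) * M < (n : ℝ) * (1 / n) := by
          exact mul_lt_mul_of_pos_left this hn'
      _ = 1 := by field_simp
  have hnM0 : 0 ≤ (n : ℝ) * M := by positivity
  calc Real.sqrt (∑ i, (_root_.sigmoid (pd i (mlext F) x) - _root_.sigmoid (pd i (mlext F) y)) ^ 2)
      ≤ Real.sqrt (((n : ℝ) * M) ^ 2 * S2) := Real.sqrt_le_sqrt hsum
    _ = ((n : ℝ) * M) * Real.sqrt S2 := by
        rw [Real.sqrt_mul (sq_nonneg _), Real.sqrt_sq hnM0]
    _ < 1 * Real.sqrt S2 :=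
        mul_lt_mul_of_pos_right hnM (Real.sqrt_pos.mpr hS2pos)
    _ = Real.sqrt S2 := one_mul _
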